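/- If a > 4 and b ∈ (0,1), then the Schwarzian derivative of f_{a,b} is negative; that is, for every x ∈ [0,1] with f_{a,b}'(x) ≠ 0 one has f_{a,b}'''(x)/f_{a,b}'(x) − (3/2)·(f_{a,b}''(x)/f_{a,b}'(x))² < 0. -/

import Mathlib

/-- The map `f_{a,b}(x) = x / (x + (1-x) * exp (a (x - b)))`. -/
noncomputable def chaosMap (a b : ℝ) : ℝ → ℝ :=
  fun x => x / (x + (1 - x) * Real.exp (a * (x - b)))

noncomputable def EE (a b x : ℝ) : ℝ := Real.exp (a * (x - b))

noncomputable def DD (a b x : ℝ) : ℝ := x + (1 - x) * EE a b x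

noncomputable def g1 (a b x : ℝ) : ℝ :=
  EE a b x * (1 - a * (x * (1 - x))) / DD a b x ^ 2

noncomputable def g2 (a b x : ℝ) : ℝ :=
  (EE a b x * (a * (1 - a * (x * (1 - x))) + -(a * (1 - 2 * x))) * DD a b x
    - 2 * (EE a b x * (1 - a * (x * (1 - x)))) * (1 - EE a b x + (1 - x) * (a * EE a b x)))
    / DD a b x ^ 3

noncomputable def g3 (a b x : ℝ) : ℝ :=
  ((a * EE a b x * (a * (1 - a * (x * (1 - x))) + -(a * (1 - 2 * x))) * DD a b x
    + EE a b x * (a * (-(a * (1 - 2 * x))) + 2 * a) * DD a b x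
    + EE a b x * (a * (1 - a * (x * (1 - x))) + -(a * (1 - 2 * x)))
        * (1 - EE a b x + (1 - x) * (a * EE a b x))
    - 2 * (a * (EE a b x * (1 - a * (x * (1 - x)))) + EE a b x * (-(a * (1 - 2 * x))))
        * (1 - EE a b x + (1 - x) * (a * EE a b x))
    - 2 * (EE a b x * (1 - a * (x * (1 - x))))
        * (-(2 * (a * EE a b x)) + (1 - x) * (a * (a * EE a b x)))) * DD a b x
   - 3 * ((EE a b x * (a * (1 - a * (x * (1 - x))) + -(a * (1 - 2 * x))) * DD a b x
        - 2 * (EE a b x * (1 - a * (x * (1 - x))))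
            * (1 - EE a b x + (1 - x) * (a * EE a b x)))
        * (1 - EE a b x + (1 - x) * (a * EE a b x))))
    / DD a b x ^ 4

lemma hasDerivAt_EE (a b x : ℝ) : HasDerivAt (EE a b) (a * EE a b x) x := by
  have h1 : HasDerivAt (fun y : ℝ => a * (y - b)) (a * 1) x :=
    HasDerivAt.const_mul a ((hasDerivAt_id x).sub_const b)
  have h2 := h1.exp
  simp only [EE]
  refine h2.congr_deriv ?_
  simp [EE]; ring

lemma hasDerivAt_DD (a b x : ℝ) :
    HasDerivAt (DD a b) (1 + ((0 - 1) * EE a b x + (1 - x) * (a * EE a b x))) x := by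
  have h := (hasDerivAt_id x).add
    (((hasDerivAt_const x (1:ℝ)).sub (hasDerivAt_id x)).mul (hasDerivAt_EE a b x))
  exact h

lemma hasDeriv_chaos (a b x : ℝ) (h : DD a b x ≠ 0) :
    HasDerivAt (chaosMap a b) (g1 a b x) x := by
  have hD := hasDerivAt_DD a b x
  have hf := (hasDerivAt_id x).div hD h
  refine hf.congr_deriv ?_
  simp only [g1, DD, id_eq]
  field_simp
  ring

lemma hasDeriv_g1 (a b x : ℝ) (h : DD a b x ≠ 0) :
    HasDerivAt (g1 a b) (g2 a b x) x := by
  have hE := hasDerivAt_EE a b x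
  have hD := hasDerivAt_DD a b x
  have ht : HasDerivAt (fun y : ℝ => 1 - a * (y * (1 - y)))
      (-(a * (1 * (1 - x) + x * (0 - 1)))) x :=
    HasDerivAt.const_sub 1 (HasDerivAt.const_mul a
      ((hasDerivAt_id x).mul ((hasDerivAt_const x (1:ℝ)).sub (hasDerivAt_id x))))
  have hN1 := hE.mul ht
  have hf := hN1.div (hD.pow 2) (pow_ne_zero 2 h)
  refine hf.congr_deriv ?_
  simp only [g2, id_eq, Pi.pow_apply, Pi.mul_apply]
  field_simp
  ring

lemma hasDeriv_g2 (a b x : ℝ) (h : DD a b x ≠ 0) :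
    HasDerivAt (g2 a b) (g3 a b x) x := by
  have hE := hasDerivAt_EE a b x
  have hD := hasDerivAt_DD a b x
  have ht : HasDerivAt (fun y : ℝ => 1 - a * (y * (1 - y)))
      (-(a * (1 * (1 - x) + x * (0 - 1)))) x :=
    HasDerivAt.const_sub 1 (HasDerivAt.const_mul a
      ((hasDerivAt_id x).mul ((hasDerivAt_const x (1:ℝ)).sub (hasDerivAt_id x))))
  have htp : HasDerivAt (fun y : ℝ => -(a * (1 - 2 * y))) (-(a * (0 - 2 * 1))) x :=
    (HasDerivAt.const_mul a ((hasDerivAt_const x (1:ℝ)).sub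
      (HasDerivAt.const_mul 2 (hasDerivAt_id x)))).neg
  have hDp : HasDerivAt (fun y : ℝ => 1 - EE a b y + (1 - y) * (a * EE a b y))
      (0 - a * EE a b x + ((0 - 1) * (a * EE a b x) + (1 - x) * (a * (a * EE a b x)))) x :=
    ((hasDerivAt_const x (1:ℝ)).sub hE).add
      (((hasDerivAt_const x (1:ℝ)).sub (hasDerivAt_id x)).mul (HasDerivAt.const_mul a hE))
  have hat := (HasDerivAt.const_mul a ht).add htp
  have hN2 := ((hE.mul hat).mul hD).sub
    ((HasDerivAt.const_mul 2 (hE.mul ht)).mul hDp)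
  have hf := hN2.div (hD.pow 3) (pow_ne_zero 3 h)
  refine hf.congr_deriv ?_
  simp only [g3, id_eq, Pi.pow_apply, Pi.mul_apply, Pi.add_apply, Pi.sub_apply]
  field_simp
  ring

theorem stmt_1 (a b : ℝ) (ha : 4 < a) (hb : b ∈ Set.Ioo (0 : ℝ) 1)
    (x : ℝ) (hx : x ∈ Set.Icc (0 : ℝ) 1) (hd : deriv (chaosMap a b) x ≠ 0) :
    deriv (deriv (deriv (chaosMap a b))) x / deriv (chaosMap a b) x
      - (3 / 2) * (deriv (deriv (chaosMap a b)) x / deriv (chaosMap a b) x) ^ 2 < 0 := by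
  obtain ⟨hx0, hx1⟩ := hx
  have hE : 0 < EE a b x := Real.exp_pos _
  have hDx : 0 < DD a b x := by
    rcases eq_or_lt_of_le hx0 with h0 | h0
    · subst h0
      simp [DD, EE, Real.exp_pos]
    · have h1 : 0 ≤ (1 - x) * EE a b x :=
        mul_nonneg (by linarith) (Real.exp_pos _).le
      simp only [DD]; linarith
  have hDcont : Continuous (DD a b) := by
    unfold DD EE; fun_prop
  have hopen : IsOpen {y : ℝ | 0 < DD a b y} := isOpen_lt continuous_const hDcont
  have hev : ∀ᶠ y in nhds x, 0 < DD a b y := hopen.mem_nhds hDx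
  have h1 : deriv (chaosMap a b) =ᶠ[nhds x] g1 a b := by
    filter_upwards [hev] with y hy
    exact (hasDeriv_chaos a b y hy.ne').deriv
  have h2 : deriv (deriv (chaosMap a b)) =ᶠ[nhds x] g2 a b := by
    filter_upwards [eventually_eventually_nhds.mpr h1, hev] with y hy hDy
    rw [Filter.EventuallyEq.deriv_eq hy]
    exact (hasDeriv_g1 a b y hDy.ne').deriv
  have h3 : deriv (deriv (deriv (chaosMap a b))) x = g3 a b x := by
    rw [h2.deriv_eq]
    exact (hasDeriv_g2 a b x hDx.ne').deriv
  have hg1 : g1 a b x ≠ 0 := by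
    rwa [h1.self_of_nhds] at hd
  rw [h3, h1.self_of_nhds, h2.self_of_nhds]
  have key : g3 a b x * g1 a b x - 3 / 2 * g2 a b x ^ 2
      = EE a b x ^ 2 / DD a b x ^ 4
        * (6 * a - a ^ 2 / 2 * ((2 - a * (x * (1 - x))) ^ 2 + 2)) := by
    have hD' : x + (1 - x) * EE a b x ≠ 0 := by
      simpa [DD] using hDx.ne'
    simp only [g1, g2, g3, DD]
    field_simp
    have hD2 : x + EE a b x * (1 - x) ≠ 0 := by rw [mul_comm]; exact hD'
    rw [div_eq_div_iff (pow_ne_zero _ hD2) (pow_ne_zero _ hD2)]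
    ring
  have hu0 : 0 ≤ x * (1 - x) := mul_nonneg hx0 (by linarith)
  have hu1 : x * (1 - x) ≤ 1 / 4 := by nlinarith [sq_nonneg (1 - 2 * x)]
  have hKey2 : 6 * a - a ^ 2 / 2 * ((2 - a * (x * (1 - x))) ^ 2 + 2) < 0 := by
    rcases le_or_gt a 8 with h8 | h8
    · have hau : a * (x * (1 - x)) ≤ a / 4 := by nlinarith
      have h2a : (0:ℝ) ≤ 2 - a / 4 := by linarith
      have h3a : 2 - a / 4 ≤ 2 - a * (x * (1 - x)) := by linarith
      have hsq : (2 - a / 4) * (2 - a / 4) ≤ (2 - a * (x * (1 - x))) * (2 - a * (x * (1 - x))) :=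
        mul_self_le_mul_self h2a h3a
      have h48 : 0 < a ^ 2 - 12 * a + 48 := by nlinarith [sq_nonneg (a - 6)]
      have hprod : 0 < (a - 4) * (a ^ 2 - 12 * a + 48) :=
        mul_pos (by linarith) h48
      nlinarith [mul_pos (show (0:ℝ) < a by linarith) hprod,
        mul_nonneg (sq_nonneg a) (sub_nonneg.mpr hsq)]
    · have h1 : 0 < a * (a - 6) := mul_pos (by linarith) (by linarith)
      nlinarith [mul_nonneg (by positivity : (0:ℝ) ≤ a ^ 2 / 2)
        (sq_nonneg (2 - a * (x * (1 - x))))]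
  have hrw : g3 a b x / g1 a b x - 3 / 2 * (g2 a b x / g1 a b x) ^ 2
      = (g3 a b x * g1 a b x - 3 / 2 * g2 a b x ^ 2) / g1 a b x ^ 2 := by
    field_simp
  rw [hrw, key]
  apply div_neg_of_neg_of_pos
  · exact mul_neg_of_pos_of_neg (by positivity) hKey2
  · exact pow_two_pos_of_ne_zero hg1
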